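/- Let X be a random variable following the Gamma distribution with shape k > 0 and rate θ > 0. Then lim_{ρ → ∞} E[log₂(1 + ρX)] / log₂(1 + ρ) = 1. (This is Proposition 2: the high-SNR slope Z = lim_{p_b/σ² → ∞} R̄_m / log₂(1 + p_b/σ²) of the ergodic rate of user m in the proposed MIMO-IRS network equals 1, independently of the number of IRS elements, the numbers of transmit/receive antennas, and the fading parameters.) -/

import Mathlib

open MeasureTheory ProbabilityTheory Filter

section StmtAux

open Real Set

lemma gamma_ae_nonneg' (k θ : ℝ) : ∀ᵐ x ∂(gammaMeasure k θ), 0 ≤ x := by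
  rw [ae_iff]
  have h : {x : ℝ | ¬ 0 ≤ x} = Iio 0 := by ext x; simp [not_le]
  rw [h, gammaMeasure, withDensity_apply _ measurableSet_Iio,
    lintegral_gammaPDF_of_nonpos le_rfl]

lemma integrable_gammaPDFReal' {k θ : ℝ} (hk : 0 < k) (hθ : 0 < θ) :
    Integrable (gammaPDFReal k θ) := by
  refine ⟨(measurable_gammaPDFReal k θ).aestronglyMeasurable, ?_⟩
  rw [hasFiniteIntegral_iff_ofReal (ae_of_all _ (gammaPDFReal_nonneg hk hθ))]
  have : ∫⁻ x, ENNReal.ofReal (gammaPDFReal k θ x) = 1 := lintegral_gammaPDF_eq_one hk hθ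
  rw [this]
  exact ENNReal.one_lt_top

lemma integrable_id_gamma' {k θ : ℝ} (hk : 0 < k) (hθ : 0 < θ) :
    Integrable id (gammaMeasure k θ) := by
  have hfm : Measurable (gammaPDF k θ) := (measurable_gammaPDFReal k θ).ennreal_ofReal
  have hflt : ∀ᵐ x ∂(volume : Measure ℝ), gammaPDF k θ x < ⊤ :=
    ae_of_all _ fun x => ENNReal.ofReal_lt_top
  rw [gammaMeasure, integrable_withDensity_iff hfm hflt]
  have heq : (fun x : ℝ => id x * (gammaPDF k θ x).toReal)
      = fun x => (k / θ) * gammaPDFReal (k + 1) θ x := by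
    funext x
    rw [id, gammaPDF, ENNReal.toReal_ofReal (gammaPDFReal_nonneg hk hθ x)]
    unfold gammaPDFReal
    rcases lt_trichotomy x 0 with hx | hx | hx
    · rw [if_neg (not_le.mpr hx), if_neg (not_le.mpr hx)]; ring
    · subst hx
      rw [if_pos le_rfl, if_pos le_rfl, show (k + 1) - 1 = k by ring,
        Real.zero_rpow hk.ne']
      ring
    · rw [if_pos hx.le, if_pos hx.le]
      have h1 : x ^ ((k + 1) - 1) = x ^ (k - 1) * x := by
        rw [show (k + 1) - 1 = (k - 1) + 1 by ring, Real.rpow_add_one hx.ne']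
      have h2 : Real.Gamma (k + 1) = k * Real.Gamma k := Real.Gamma_add_one hk.ne'
      have h3 : θ ^ (k + 1) = θ ^ k * θ := by rw [Real.rpow_add_one hθ.ne']
      have hΓ : Real.Gamma k ≠ 0 := (Real.Gamma_pos_of_pos hk).ne'
      rw [h1, h2, h3]
      field_simp
  rw [heq]
  exact (integrable_gammaPDFReal' (by linarith) hθ).const_mul _

lemma gamma_Ioi_eq_one' {k θ : ℝ} (hk : 0 < k) (hθ : 0 < θ) :
    gammaMeasure k θ (Ioi 0) = 1 := by
  have hprob : IsProbabilityMeasure (gammaMeasure k θ) := isProbabilityMeasure_gammaMeasure hk hθ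
  have hac : gammaMeasure k θ ≪ volume := withDensity_absolutelyContinuous _ _
  have h0 : gammaMeasure k θ {(0 : ℝ)} = 0 := hac (Real.volume_singleton)
  have hIio : gammaMeasure k θ (Iio 0) = 0 := by
    rw [gammaMeasure, withDensity_apply _ measurableSet_Iio]
    exact lintegral_gammaPDF_of_nonpos le_rfl
  have hIic : gammaMeasure k θ (Iic 0) = 0 := by
    rw [← Iio_union_right]
    exact measure_union_null hIio h0
  rw [← compl_Iic, prob_compl_eq_one_sub measurableSet_Iic, hIic, tsub_zero]

end StmtAux

theorem stmt_11 (k θ : ℝ) (hk : 0 < k) (hθ : 0 < θ)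
    {Ω : Type*} [MeasurableSpace Ω] (μ : Measure Ω) [IsProbabilityMeasure μ]
    (X : Ω → ℝ) (hXm : Measurable X)
    (hX : Measure.map X μ = gammaMeasure k θ) :
    Tendsto (fun ρ : ℝ => (∫ ω, Real.logb 2 (1 + ρ * X ω) ∂μ) / Real.logb 2 (1 + ρ))
      atTop (nhds 1) := by
  classical
  set γ := gammaMeasure k θ with hγ
  have hprob : IsProbabilityMeasure γ := isProbabilityMeasure_gammaMeasure hk hθ
  have hae : ∀ᵐ x ∂γ, 0 ≤ x := gamma_ae_nonneg' k θ
  have hid : Integrable id γ := integrable_id_gamma' hk hθ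
  -- measurability of the basic function
  have hmeas : ∀ ρ : ℝ, Measurable fun x : ℝ => Real.log (1 + ρ * x) := fun ρ =>
    Real.measurable_log.comp (measurable_const.add (measurable_const.mul measurable_id))
  -- integrability of log (1 + x)
  have hlog1 : Integrable (fun x => Real.log (1 + x)) γ := by
    refine hid.mono ((Real.measurable_log.comp
      (measurable_const.add measurable_id)).aestronglyMeasurable) ?_
    filter_upwards [hae] with x hx
    have h1 : 0 ≤ Real.log (1 + x) := Real.log_nonneg (by linarith)
    have h2 := Real.log_le_sub_one_of_pos (show (0:ℝ) < 1 + x by linarith)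
    rw [Real.norm_eq_abs, abs_of_nonneg h1, id, Real.norm_eq_abs, abs_of_nonneg hx]
    linarith
  -- integrability of log (1 + ρ x)
  have hInt : ∀ ρ : ℝ, 0 ≤ ρ → Integrable (fun x => Real.log (1 + ρ * x)) γ := by
    intro ρ hρ
    refine ((integrable_const (Real.log (1 + ρ))).add hid).mono
      ((hmeas ρ).aestronglyMeasurable) ?_
    filter_upwards [hae] with x hx
    have h0 : (0:ℝ) ≤ ρ * x := mul_nonneg hρ hx
    have h1 : 0 ≤ Real.log (1 + ρ * x) := Real.log_nonneg (by linarith)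
    have hb : Real.log (1 + ρ * x) ≤ Real.log (1 + ρ) + x := by
      have hle : Real.log (1 + ρ * x) ≤ Real.log ((1 + ρ) * (1 + x)) :=
        Real.log_le_log (by linarith) (by nlinarith)
      rw [Real.log_mul (by linarith) (by linarith)] at hle
      have h2 := Real.log_le_sub_one_of_pos (show (0:ℝ) < 1 + x by linarith)
      linarith
    rw [Real.norm_eq_abs, abs_of_nonneg h1]
    simp only [Pi.add_apply, id]
    exact hb.trans (le_abs_self _)
  set I : ℝ → ℝ := fun ρ => ∫ x, Real.log (1 + ρ * x) ∂γ with hI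
  set L : ℝ → ℝ := fun ρ => Real.log (1 + ρ) with hLdef
  have hL : Tendsto L atTop atTop :=
    Real.tendsto_log_atTop.comp (tendsto_atTop_add_const_left _ 1 tendsto_id)
  -- reduce the statement to I/L
  have hlog2 : Real.log 2 ≠ 0 := (Real.log_pos one_lt_two).ne'
  have hred : (fun ρ : ℝ => (∫ ω, Real.logb 2 (1 + ρ * X ω) ∂μ) / Real.logb 2 (1 + ρ))
      = fun ρ => I ρ / L ρ := by
    funext ρ
    have hmb : AEStronglyMeasurable (fun x : ℝ => Real.logb 2 (1 + ρ * x))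
        (Measure.map X μ) :=
      (((hmeas ρ).div_const (Real.log 2)).aestronglyMeasurable :)
    have hmap : (∫ ω, Real.logb 2 (1 + ρ * X ω) ∂μ) = ∫ x, Real.logb 2 (1 + ρ * x) ∂γ := by
      rw [← hX, integral_map hXm.aemeasurable hmb]
    rw [hmap]
    simp only [Real.logb, hI, hLdef]
    rw [integral_div, div_div_div_comm, div_self hlog2, div_one]
  rw [hred]
  -- constants
  set C : ℝ := ∫ x, Real.log (1 + x) ∂γ with hC
  refine tendsto_order.2 ⟨fun a ha => ?_, fun b hb => ?_⟩
  · -- lower bound: pick δ with mass close to 1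
    have hmono : Monotone fun n : ℕ => Set.Ici (1 / ((n : ℝ) + 1)) := by
      intro n m hnm
      apply Set.Ici_subset_Ici.2
      gcongr
    have hUnion : (⋃ n : ℕ, Set.Ici (1 / ((n : ℝ) + 1))) = Set.Ioi (0:ℝ) := by
      ext x
      simp only [Set.mem_iUnion, Set.mem_Ici, Set.mem_Ioi]
      constructor
      · rintro ⟨n, hn⟩
        have : (0:ℝ) < 1 / ((n : ℝ) + 1) := by positivity
        linarith
      · intro hx
        obtain ⟨n, hn⟩ := exists_nat_one_div_lt hx
        exact ⟨n, hn.le⟩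
    have htm : Tendsto (fun n : ℕ => γ (Set.Ici (1 / ((n : ℝ) + 1)))) atTop (nhds 1) := by
      have := tendsto_measure_iUnion_atTop (μ := γ) hmono
      rwa [hUnion, gamma_Ioi_eq_one' hk hθ] at this
    have htr : Tendsto (fun n : ℕ => (γ (Set.Ici (1 / ((n : ℝ) + 1)))).toReal) atTop
        (nhds 1) := by
      have := (ENNReal.tendsto_toReal ENNReal.one_ne_top).comp htm
      exact this
    obtain ⟨n, hn⟩ := (htr.eventually (eventually_gt_nhds ha)).exists
    set δ : ℝ := 1 / ((n : ℝ) + 1) with hδ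
    have hδpos : 0 < δ := by positivity
    have hδle1 : δ ≤ 1 := by
      rw [hδ, div_le_one (by positivity)]
      simp
    set p : ℝ := (γ (Set.Ici δ)).toReal with hp
    have hp0 : 0 ≤ p := ENNReal.toReal_nonneg
    have hap : a < p := hn
    have hlb : ∀ᶠ ρ in atTop, p * (1 + Real.log δ / L ρ) ≤ I ρ / L ρ := by
      filter_upwards [eventually_ge_atTop (0:ℝ), hL.eventually_gt_atTop 0] with ρ hρ0 hLρ
      have hIlb : p * (Real.log δ + L ρ) ≤ I ρ := by
        have h1 : (∫ x, (Set.Ici δ).indicator (fun _ => Real.log (1 + ρ * δ)) x ∂γ) ≤ I ρ := by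
          refine integral_mono_ae ((integrable_const _).indicator measurableSet_Ici)
            (hInt ρ hρ0) ?_
          filter_upwards [hae] with x hx
          by_cases hxδ : x ∈ Set.Ici δ
          · rw [Set.indicator_of_mem hxδ]
            exact Real.log_le_log (by nlinarith) (by nlinarith [Set.mem_Ici.1 hxδ])
          · rw [Set.indicator_of_notMem hxδ]
            exact Real.log_nonneg (by nlinarith)
        rw [integral_indicator_const _ measurableSet_Ici, smul_eq_mul] at h1
        have h2 : Real.log δ + L ρ ≤ Real.log (1 + ρ * δ) := by
          have hδρ : δ * (1 + ρ) ≤ 1 + ρ * δ := by nlinarith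
          have := Real.log_le_log (by positivity) hδρ
          rwa [Real.log_mul hδpos.ne' (by linarith)] at this
        calc p * (Real.log δ + L ρ) ≤ p * Real.log (1 + ρ * δ) :=
              mul_le_mul_of_nonneg_left h2 hp0
          _ ≤ I ρ := h1
      have heqd : p * (1 + Real.log δ / L ρ) = p * (Real.log δ + L ρ) / L ρ := by
        rw [mul_div_assoc, add_div, div_self hLρ.ne']
        ring
      rw [heqd]
      gcongr
    have htp : Tendsto (fun ρ => p * (1 + Real.log δ / L ρ)) atTop (nhds p) := by
      have h0 : Tendsto (fun ρ => Real.log δ / L ρ) atTop (nhds 0) :=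
        tendsto_const_nhds.div_atTop hL
      have h1 : Tendsto (fun ρ => 1 + Real.log δ / L ρ) atTop (nhds (1 + 0)) :=
        tendsto_const_nhds.add h0
      have h2 : Tendsto (fun ρ => p * (1 + Real.log δ / L ρ)) atTop (nhds (p * (1 + 0))) :=
        h1.const_mul p
      simpa using h2
    filter_upwards [hlb, htp.eventually (eventually_gt_nhds hap)] with ρ h1 h2
    exact lt_of_lt_of_le h2 h1
  · -- upper bound
    have htop : Tendsto (fun ρ => 1 + C / L ρ) atTop (nhds 1) := by
      have h0 : Tendsto (fun ρ => C / L ρ) atTop (nhds 0) :=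
        tendsto_const_nhds.div_atTop hL
      have h1 : Tendsto (fun ρ => 1 + C / L ρ) atTop (nhds (1 + 0)) :=
        tendsto_const_nhds.add h0
      simpa using h1
    have hub : ∀ᶠ ρ in atTop, I ρ / L ρ ≤ 1 + C / L ρ := by
      filter_upwards [eventually_ge_atTop (0:ℝ), hL.eventually_gt_atTop 0] with ρ hρ0 hLρ
      have hIle : I ρ ≤ L ρ + C := by
        have h1 : I ρ ≤ ∫ x, (L ρ + Real.log (1 + x)) ∂γ := by
          refine integral_mono_ae (hInt ρ hρ0) ((integrable_const _).add hlog1) ?_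
          filter_upwards [hae] with x hx
          have h0 : (0:ℝ) ≤ ρ * x := mul_nonneg hρ0 hx
          have hle : Real.log (1 + ρ * x) ≤ Real.log ((1 + ρ) * (1 + x)) :=
            Real.log_le_log (by linarith) (by nlinarith)
          rwa [Real.log_mul (by linarith) (by linarith)] at hle
        rwa [integral_add (integrable_const _) hlog1, integral_const, probReal_univ,
          one_smul] at h1
      have heqd : (1:ℝ) + C / L ρ = (L ρ + C) / L ρ := by
        rw [add_div, div_self hLρ.ne']
      rw [heqd]
      gcongr
    filter_upwards [hub, htop.eventually (eventually_lt_nhds hb)] with ρ h1 h2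
    exact lt_of_le_of_lt h1 h2
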